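/- Let T be a CNF theory, L ⊆ Lit(T) with L⁺ = ∅, and X ⊆ At(T) a set of atoms consistent with L. Then X is a minimal model of T if and only if X is a minimal model of T_L. -/
import Mathlib


open Classical

/-- A literal: `(true, a)` is the atom `a`, `(false, a)` is the negated atom `¬ a`. -/
abbrev Lit : Type := Bool × ℕ

/-- A clause: a finite set of literals, viewed as the disjunction of its literals. -/
abbrev Clause : Type := Finset Lit

/-- A CNF theory: a finite set of clauses. -/
abbrev CTheory : Type := Finset Clause

/-- A clause is proper: it contains no atom together with its negation. -/
def Clause.ok (c : Clause) : Prop :=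
  ∀ a : ℕ, ¬ (((true, a) : Lit) ∈ c ∧ ((false, a) : Lit) ∈ c)

/-- The set of atoms occurring in a clause. -/
def clauseAtoms (c : Clause) : Finset ℕ := c.image Prod.snd

/-- `At(T)`: the set of atoms occurring in a CNF theory. -/
def thAtoms (T : CTheory) : Finset ℕ := T.sup clauseAtoms

/-- A set of atoms `M` satisfies a literal `l`. -/
def satLit (M : Finset ℕ) (l : Lit) : Prop := if l.1 then l.2 ∈ M else l.2 ∉ M

/-- `M` is a model of the CNF theory `T`. -/
def isModel (M : Finset ℕ) (T : CTheory) : Prop := ∀ c ∈ T, ∃ l ∈ c, satLit M l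

/-- `M` is a minimal model of `T`: a model `M ⊆ At(T)` no proper subset of which is a model. -/
def isMinModel (M : Finset ℕ) (T : CTheory) : Prop :=
  isModel M T ∧ M ⊆ thAtoms T ∧ ∀ M' : Finset ℕ, M' ⊂ M → ¬ isModel M' T

/-- The dual of a literal. -/
def litNeg (l : Lit) : Lit := (!l.1, l.2)

/-- `L̄`: the set of duals of the literals of `L`. -/
def negSet (L : Finset Lit) : Finset Lit := L.image litNeg

/-- `L⁺`: the set of atoms belonging to `L`. -/
def posAtoms (L : Finset Lit) : Finset ℕ := (L.filter (fun l => l.1 = true)).image Prod.snd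

/-- `L⁻`: the set of atoms whose negation belongs to `L`. -/
def negAtoms (L : Finset Lit) : Finset ℕ := (L.filter (fun l => l.1 = false)).image Prod.snd

/-- A set of atoms `M` is consistent with a set of literals `L` if `L⁺ ⊆ M` and `L⁻ ∩ M = ∅`. -/
def consistentWith (M : Finset ℕ) (L : Finset Lit) : Prop :=
  posAtoms L ⊆ M ∧ ∀ a ∈ negAtoms L, a ∉ M

/-- `Lit(T)`: the set of all literals over the atoms of `T`. -/
def litsOf (T : CTheory) : Finset Lit :=
  (thAtoms T).image (fun a => ((true, a) : Lit)) ∪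
    (thAtoms T).image (fun a => ((false, a) : Lit))

/-- `T_L = {c \ L̄ : c ∈ T, c ∩ L = ∅}`. -/
def reduceTh (T : CTheory) (L : Finset Lit) : CTheory :=
  (T.filter (fun c => ∀ l ∈ c, l ∉ L)).image (fun c => c \ negSet L)

lemma mem_negAtoms' {L : Finset Lit} {a : ℕ} :
    a ∈ negAtoms L ↔ ((false, a) : Lit) ∈ L := by
  constructor
  · intro h
    obtain ⟨l, hl, rfl⟩ := Finset.mem_image.1 h
    obtain ⟨hlL, hf⟩ := Finset.mem_filter.1 hl
    have : l = (false, l.2) := by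
      rcases l with ⟨b, n⟩; simp_all
    rwa [this] at hlL
  · intro h
    exact Finset.mem_image.2 ⟨(false, a), Finset.mem_filter.2 ⟨h, rfl⟩, rfl⟩

lemma atom_mem_thAtoms {T' : CTheory} {c : Clause} {l : Lit}
    (hc : c ∈ T') (hl : l ∈ c) : l.2 ∈ thAtoms T' :=
  Finset.mem_sup.2 ⟨c, hc, Finset.mem_image.2 ⟨l, hl, rfl⟩⟩

/-- Let `T` be a CNF theory, `L ⊆ Lit(T)` with `L⁺ = ∅`, and `X ⊆ At(T)` consistent with `L`.
Then `X` is a minimal model of `T` iff `X` is a minimal model of `T_L`. -/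
theorem minModel_iff_minModel_reduce (T : CTheory) (hok : ∀ c ∈ T, Clause.ok c)
    (L : Finset Lit) (hL : L ⊆ litsOf T) (hpos : posAtoms L = ∅)
    (X : Finset ℕ) (hX : X ⊆ thAtoms T) (hcons : consistentWith X L) :
    isMinModel X T ↔ isMinModel X (reduceTh T L) := by
  have hfalse : ∀ l ∈ L, l.1 = false := by
    intro l hl
    cases hb : l.1 with
    | false => rfl
    | true =>
      exfalso
      have : l.2 ∈ posAtoms L :=
        Finset.mem_image.2 ⟨l, Finset.mem_filter.2 ⟨hl, hb⟩, rfl⟩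
      simp [hpos] at this
  have hmemneg : ∀ l ∈ L, l.2 ∈ negAtoms L := by
    intro l hl
    refine mem_negAtoms'.2 ?_
    have : l = (false, l.2) := by
      rcases l with ⟨b, n⟩; have := hfalse _ hl; simp_all
    rwa [this] at hl
  have key : ∀ M : Finset ℕ, (∀ a ∈ negAtoms L, a ∉ M) →
      (isModel M T ↔ isModel M (reduceTh T L)) := by
    intro M hM
    constructor
    · intro h c' hc'
      simp only [reduceTh, Finset.mem_image, Finset.mem_filter] at hc'
      obtain ⟨c, ⟨hcT, hcL⟩, rfl⟩ := hc'
      obtain ⟨l, hlc, hsat⟩ := h c hcT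
      refine ⟨l, Finset.mem_sdiff.2 ⟨hlc, ?_⟩, hsat⟩
      intro hln
      obtain ⟨l', hl'L, rfl⟩ := Finset.mem_image.1 hln
      have hf := hfalse l' hl'L
      have hna := hM _ (hmemneg l' hl'L)
      simp [satLit, litNeg, hf] at hsat
      exact hna hsat
    · intro h c hc
      by_cases hcap : ∀ l ∈ c, l ∉ L
      · have hmem : c \ negSet L ∈ reduceTh T L :=
          Finset.mem_image.2 ⟨c, Finset.mem_filter.2 ⟨hc, hcap⟩, rfl⟩
        obtain ⟨l, hl, hsat⟩ := h _ hmem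
        exact ⟨l, (Finset.mem_sdiff.1 hl).1, hsat⟩
      · push_neg at hcap
        obtain ⟨l, hlc, hlL⟩ := hcap
        have hf := hfalse l hlL
        refine ⟨l, hlc, ?_⟩
        simp only [satLit, hf]
        simpa using hM _ (hmemneg l hlL)
  have hXc : ∀ M ⊆ X, ∀ a ∈ negAtoms L, a ∉ M :=
    fun M hMX a ha hm => hcons.2 a ha (hMX hm)
  constructor
  · rintro ⟨hmod, hsub, hmin⟩
    have hmodR := (key X (hXc X subset_rfl)).1 hmod
    refine ⟨hmodR, ?_, ?_⟩
    · intro a haX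
      by_contra ha
      have herase : isModel (X.erase a) (reduceTh T L) := by
        intro c hc
        obtain ⟨l, hl, hsat⟩ := hmodR c hc
        refine ⟨l, hl, ?_⟩
        have hla : l.2 ≠ a := fun heq => ha (heq ▸ atom_mem_thAtoms hc hl)
        rcases l with ⟨b, n⟩
        cases b <;> simp_all [satLit, Finset.mem_erase]
      have heraseT : isModel (X.erase a) T :=
        (key _ (hXc _ (Finset.erase_subset _ _))).2 herase
      exact hmin _ (Finset.erase_ssubset haX) heraseT
    · intro M' hM' hmod'
      exact hmin M' hM' ((key M' (hXc M' hM'.subset)).2 hmod')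
  · rintro ⟨hmod, _, hmin⟩
    refine ⟨(key X (hXc X subset_rfl)).2 hmod, hX, ?_⟩
    intro M' hM' hmod'
    exact hmin M' hM' ((key M' (hXc M' hM'.subset)).1 hmod')
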